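/- Let x̂ ∈ ℝⁿ, A ∈ ℝ^{m×n}, b ∈ ℝᵐ, index sets Jᵢ ⊆ {1,…,n}, and nonnegative uncertainty parameters αᵢⱼ for j ∈ Jᵢ. Suppose (α, c, u, π, λ, μ) satisfies: αᵢⱼ x̂ⱼ + uᵢⱼ ≥ 0 and −αᵢⱼ x̂ⱼ + uᵢⱼ ≥ 0 for all j ∈ Jᵢ, i; Σ_{j∈J} aᵢⱼ x̂ⱼ − Σ_{j∈Jᵢ} uᵢⱼ ≥ bᵢ for all i; αᵢⱼ ≥ 0; Σᵢ πᵢ = 1; cⱼ = Σᵢ aᵢⱼ πᵢ + Σ_{i: j∈Jᵢ} αᵢⱼ(λᵢⱼ − μᵢⱼ); πᵢ = λᵢⱼ + μᵢⱼ; π, λ, μ ≥ 0; and strong duality cᵀx̂ = bᵀπ. Then there exists î such that Σ_{j∈J} a_{îj} x̂ⱼ − Σ_{j∈J_î} α_{îj}|x̂ⱼ| = b_î, and for every i, Σ_{j∈J} aᵢⱼ x̂ⱼ − Σ_{j∈Jᵢ} αᵢⱼ|x̂ⱼ| ≥ bᵢ. -/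

import Mathlib

/-- A feasible solution of RLO-IU-SD makes xh robust feasible with at least one
robust constraint active. -/
theorem stmt_11 {n m : ℕ} (xh : Fin n → ℝ) (A : Matrix (Fin m) (Fin n) ℝ)
    (b : Fin m → ℝ) (J : Fin m → Finset (Fin n))
    (α u lam mu : Fin m → Fin n → ℝ) (c : Fin n → ℝ) (π : Fin m → ℝ)
    (hp1 : ∀ i, ∀ j ∈ J i, α i j * xh j + u i j ≥ 0)
    (hp2 : ∀ i, ∀ j ∈ J i, -(α i j) * xh j + u i j ≥ 0)
    (hp3 : ∀ i, (∑ j, A i j * xh j) - ∑ j ∈ J i, u i j ≥ b i)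
    (hα : ∀ i, ∀ j ∈ J i, 0 ≤ α i j)
    (hnorm : ∑ i, π i = 1)
    (hd1 : ∀ j, c j = (∑ i, A i j * π i)
        + ∑ i ∈ Finset.univ.filter (fun i => j ∈ J i), α i j * (lam i j - mu i j))
    (hd2 : ∀ i, ∀ j ∈ J i, π i = lam i j + mu i j)
    (hπ : ∀ i, 0 ≤ π i)
    (hlm : ∀ i, ∀ j ∈ J i, 0 ≤ lam i j ∧ 0 ≤ mu i j)
    (hsd : ∑ j, c j * xh j = ∑ i, b i * π i) :
    (∃ ihat, (∑ j, A ihat j * xh j) - ∑ j ∈ J ihat, α ihat j * |xh j| = b ihat) ∧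
    (∀ i, (∑ j, A i j * xh j) - ∑ j ∈ J i, α i j * |xh j| ≥ b i) := by
  -- robust feasibility
  have hfeas : ∀ i, (∑ j, A i j * xh j) - ∑ j ∈ J i, α i j * |xh j| ≥ b i := by
    intro i
    have hsum : ∑ j ∈ J i, α i j * |xh j| ≤ ∑ j ∈ J i, u i j := by
      apply Finset.sum_le_sum
      intro j hj
      have h1 := hp1 i j hj
      have h2 := hp2 i j hj
      have habs : |α i j * xh j| ≤ u i j := abs_le.2 ⟨by linarith, by linarith⟩
      calc α i j * |xh j| = |α i j * xh j| := by
            rw [abs_mul, abs_of_nonneg (hα i j hj)]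
        _ ≤ u i j := habs
    have := hp3 i
    linarith
  refine ⟨?_, hfeas⟩
  -- slack
  set s : Fin m → ℝ :=
    fun i => (∑ j, A i j * xh j) - (∑ j ∈ J i, α i j * |xh j|) - b i with hs
  have hs0 : ∀ i, 0 ≤ s i := fun i => by have := hfeas i; simp only [hs]; linarith
  set T1 : ℝ := ∑ i, ∑ j ∈ J i, α i j * (lam i j - mu i j) * xh j with hT1
  set T2 : ℝ := ∑ i, ∑ j ∈ J i, (lam i j + mu i j) * (α i j * |xh j|) with hT2
  have h1 : ∑ i, π i * ∑ j, A i j * xh j = ∑ j, (∑ i, A i j * π i) * xh j := by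
    simp_rw [Finset.mul_sum, Finset.sum_mul]
    rw [Finset.sum_comm]
    exact Finset.sum_congr rfl fun j _ => Finset.sum_congr rfl fun i _ => by ring
  have h3 : ∑ j, (∑ i ∈ Finset.univ.filter (fun i => j ∈ J i),
        α i j * (lam i j - mu i j)) * xh j = T1 := by
    simp_rw [Finset.sum_mul]
    rw [Finset.sum_comm' (t' := Finset.univ) (s' := fun i => J i)]
    intro i j; simp
  have h2 : ∑ j, c j * xh j = ∑ j, (∑ i, A i j * π i) * xh j + T1 := by
    rw [← h3, ← Finset.sum_add_distrib]
    exact Finset.sum_congr rfl fun j _ => by rw [hd1 j]; ring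
  have h4 : ∑ i, π i * ∑ j ∈ J i, α i j * |xh j| = T2 := by
    apply Finset.sum_congr rfl; intro i _
    rw [Finset.mul_sum]
    exact Finset.sum_congr rfl fun j hj => by rw [← hd2 i j hj]
  have expand : ∑ i, π i * s i
      = (∑ i, π i * ∑ j, A i j * xh j)
        - (∑ i, π i * ∑ j ∈ J i, α i j * |xh j|)
        - ∑ i, b i * π i := by
    simp only [hs]
    rw [← Finset.sum_sub_distrib, ← Finset.sum_sub_distrib]
    exact Finset.sum_congr rfl fun i _ => by ring
  have hA : ∑ i, π i * ∑ j, A i j * xh j = ∑ i, b i * π i - T1 := by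
    rw [h1]; linarith [h2, hsd]
  have hkey : ∑ i, π i * s i = -(T1 + T2) := by
    rw [expand, hA, h4]; ring
  have hTnn : 0 ≤ T1 + T2 := by
    have : T1 + T2 = ∑ i, ∑ j ∈ J i,
        α i j * (lam i j * (xh j + |xh j|) + mu i j * (|xh j| - xh j)) := by
      rw [hT1, hT2, ← Finset.sum_add_distrib]
      apply Finset.sum_congr rfl; intro i _
      rw [← Finset.sum_add_distrib]
      exact Finset.sum_congr rfl fun j _ => by ring
    rw [this]
    apply Finset.sum_nonneg; intro i _
    apply Finset.sum_nonneg; intro j hj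
    have h5 := hlm i j hj
    have h6 : 0 ≤ xh j + |xh j| := by have := neg_abs_le (xh j); linarith
    have h7 : 0 ≤ |xh j| - xh j := by have := le_abs_self (xh j); linarith
    exact mul_nonneg (hα i j hj)
      (add_nonneg (mul_nonneg h5.1 h6) (mul_nonneg h5.2 h7))
  have hzero : ∑ i, π i * s i = 0 :=
    le_antisymm (by rw [hkey]; linarith)
      (Finset.sum_nonneg fun i _ => mul_nonneg (hπ i) (hs0 i))
  have hterm : ∀ i ∈ Finset.univ, π i * s i = 0 :=
    (Finset.sum_eq_zero_iff_of_nonneg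
      (fun i _ => mul_nonneg (hπ i) (hs0 i))).1 hzero
  obtain ⟨i, hi⟩ : ∃ i, π i ≠ 0 := by
    by_contra h
    push_neg at h
    rw [Finset.sum_eq_zero (fun i _ => h i)] at hnorm
    norm_num at hnorm
  have : s i = 0 := by
    have := hterm i (Finset.mem_univ i)
    rcases mul_eq_zero.1 this with h | h
    · exact absurd h hi
    · exact h
  exact ⟨i, by simp only [hs] at this; linarith⟩
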